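/- For every integer k ≥ 1 and every x ∈ [0,1], G_k(x) = 2√2 · ((k−1)!/Γ(k+3/2)) · (1−x)^{3/2} · Σ_{t=1}^{k} (Γ(k−t+3/2)/(k−t)!) · (2x−1)^{t−1}, where Γ is the Gamma function. -/

import Mathlib

open MeasureTheory

/-- `G_k(x) = ∫_{2x-1}^{1} t^{k-1} √(1 + t - 2x) dt` for `k ≥ 1` (and `G₀ ≡ 0`). -/
noncomputable def G : ℕ → ℝ → ℝ
  | 0, _ => 0
  | (k + 1), x => ∫ t in (2 * x - 1)..1, t ^ k * Real.sqrt (1 + t - 2 * x)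

lemma hasDerivAt_mul_sqrt (s : ℝ) :
    HasDerivAt (fun u : ℝ => u * Real.sqrt u) ((3/2) * Real.sqrt s) s := by
  rcases lt_trichotomy s 0 with hs | rfl | hs
  · have h0 : Real.sqrt s = 0 := Real.sqrt_eq_zero_of_nonpos hs.le
    have h1 : (fun u : ℝ => u * Real.sqrt u) =ᶠ[nhds s] fun _ => 0 := by
      filter_upwards [Iio_mem_nhds hs] with u hu
      simp [Real.sqrt_eq_zero_of_nonpos (le_of_lt hu)]
    rw [h0, mul_zero]
    exact (hasDerivAt_const s 0).congr_of_eventuallyEq h1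
  · rw [Real.sqrt_zero, mul_zero]
    rw [hasDerivAt_iff_tendsto_slope]
    have h1 : ∀ u : ℝ, u ≠ 0 → slope (fun u : ℝ => u * Real.sqrt u) 0 u = Real.sqrt u := by
      intro u hu
      simp [slope, hu]
    have : Filter.Tendsto Real.sqrt (nhdsWithin 0 {(0:ℝ)}ᶜ) (nhds 0) := by
      simpa using (Real.continuous_sqrt.continuousAt (x := 0)).tendsto.mono_left
        nhdsWithin_le_nhds
    refine this.congr' ?_
    filter_upwards [self_mem_nhdsWithin] with u hu
    exact (h1 u hu).symm
  · have hsq := Real.hasDerivAt_sqrt hs.ne'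
    have h : HasDerivAt (fun u : ℝ => u * Real.sqrt u) (1 * Real.sqrt s + s * (1 / (2 * Real.sqrt s))) s :=
      (hasDerivAt_id s).mul hsq
    have hne : Real.sqrt s ≠ 0 := by positivity
    have hsqs : Real.sqrt s * Real.sqrt s = s := Real.mul_self_sqrt hs.le
    convert h using 1
    field_simp
    nlinarith [hsqs]

lemma cont_aux (n : ℕ) (y : ℝ) : Continuous fun t : ℝ =>
    (n:ℝ) * t^(n-1) * ((t - y) * Real.sqrt (t - y)) + t^n * ((3/2) * Real.sqrt (t - y)) := by
  fun_prop

lemma ftc (n : ℕ) (y : ℝ) :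
    ∫ t in y..1, ((n:ℝ) * t^(n-1) * ((t - y) * Real.sqrt (t - y))
        + t^n * ((3/2) * Real.sqrt (t - y)))
      = (1 - y) * Real.sqrt (1 - y) := by
  have h : ∀ t ∈ Set.uIcc y 1,
      HasDerivAt (fun t => t^n * ((t - y) * Real.sqrt (t - y)))
        ((n:ℝ) * t^(n-1) * ((t - y) * Real.sqrt (t - y)) + t^n * ((3/2) * Real.sqrt (t - y))) t := by
    intro t _
    have hinner : HasDerivAt (fun t : ℝ => t - y) 1 t := (hasDerivAt_id t).sub_const y
    have houter : HasDerivAt (fun t : ℝ => (t - y) * Real.sqrt (t - y))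
        ((3/2) * Real.sqrt (t - y)) t := by
      simpa [Function.comp_def] using (hasDerivAt_mul_sqrt (t - y)).comp t hinner
    simpa [Pi.mul_def] using (hasDerivAt_pow n t).mul houter
  have := intervalIntegral.integral_eq_sub_of_hasDerivAt h
    ((cont_aux n y).intervalIntegrable y 1)
  simpa using this

lemma G_eq (m : ℕ) (x : ℝ) :
    G (m+1) x = ∫ t in (2*x-1)..1, t ^ m * Real.sqrt (t - (2*x-1)) := by
  show (∫ t in (2*x-1)..1, t ^ m * Real.sqrt (1 + t - 2*x)) = _
  congr 1
  funext t
  rw [show (1:ℝ) + t - 2*x = t - (2*x-1) by ring]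

lemma G_rec (n : ℕ) (x : ℝ) :
    ((n:ℝ) + 3/2) * G (n+1) x = (n:ℝ) * (2*x-1) * G n x
      + (2 - 2*x) * Real.sqrt (2 - 2*x) := by
  set y : ℝ := 2*x - 1 with hy
  have h2x : (2:ℝ) - 2*x = 1 - y := by rw [hy]; ring
  rw [h2x]
  have hB : ∀ m : ℕ, (∫ t in y..1, t^m * ((3/2) * Real.sqrt (t - y)))
      = (3/2) * G (m+1) x := by
    intro m
    rw [G_eq m x, ← hy, ← intervalIntegral.integral_const_mul]
    congr 1; funext t; ring
  have hcont : ∀ m : ℕ, Continuous fun t : ℝ => t^m * Real.sqrt (t - y) := by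
    intro m; fun_prop
  cases n with
  | zero =>
    have h := ftc 0 y
    simp only [Nat.cast_zero, zero_mul, pow_zero, one_mul, zero_add] at h ⊢
    rw [← h, ← hB 0]
    congr 1; funext t; ring
  | succ m =>
    have h := ftc (m+1) y
    have hsplit : (∫ t in y..1, (((m:ℝ)+1) * t^m * ((t - y) * Real.sqrt (t - y))
          + t^(m+1) * ((3/2) * Real.sqrt (t - y))))
        = (((m:ℝ)+1) * ∫ t in y..1, t^(m+1) * Real.sqrt (t - y))
          - (((m:ℝ)+1) * y) * (∫ t in y..1, t^m * Real.sqrt (t - y))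
          + ∫ t in y..1, t^(m+1) * ((3/2) * Real.sqrt (t - y)) := by
      rw [← intervalIntegral.integral_const_mul, ← intervalIntegral.integral_const_mul,
        ← intervalIntegral.integral_sub
          (show IntervalIntegrable (fun t => ((m:ℝ)+1) * (t^(m+1) * Real.sqrt (t - y))) volume y 1 from
            (continuous_const.mul (hcont (m+1))).intervalIntegrable y 1)
          (show IntervalIntegrable (fun t => (((m:ℝ)+1) * y) * (t^m * Real.sqrt (t - y))) volume y 1 from
            (continuous_const.mul (hcont m)).intervalIntegrable y 1),
        ← intervalIntegral.integral_add
          (show IntervalIntegrable (fun t => ((m:ℝ)+1) * (t^(m+1) * Real.sqrt (t - y))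
              - (((m:ℝ)+1) * y) * (t^m * Real.sqrt (t - y))) volume y 1 from
            ((continuous_const.mul (hcont (m+1))).sub (continuous_const.mul (hcont m))).intervalIntegrable y 1)
          ((by fun_prop : Continuous fun t : ℝ => t^(m+1) * ((3/2:ℝ) * Real.sqrt (t - y))).intervalIntegrable y 1)]
      · congr 1; funext t; ring
    simp only [Nat.add_sub_cancel, Nat.cast_add, Nat.cast_one] at h
    rw [hsplit] at h
    have hI1 : (∫ t in y..1, t^(m+1) * Real.sqrt (t - y)) = G (m+1+1) x := by
      rw [G_eq (m+1) x, ← hy]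
    have hI0 : (∫ t in y..1, t^m * Real.sqrt (t - y)) = G (m+1) x := by
      rw [G_eq m x, ← hy]
    rw [hI1, hI0, hB (m+1)] at h
    push_cast
    linear_combination h

noncomputable def cG (m : ℕ) : ℝ := Real.Gamma ((m:ℝ) + 3/2) / (Nat.factorial m : ℝ)

noncomputable def S (k : ℕ) (y : ℝ) : ℝ := ∑ j ∈ Finset.range k, cG (k - 1 - j) * y^j

lemma S_succ (k : ℕ) (y : ℝ) : S (k+1) y = cG k + y * S k y := by
  rw [S, Finset.sum_range_succ']
  simp only [Nat.add_sub_cancel, Nat.sub_zero, pow_zero, mul_one]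
  rw [S, Finset.mul_sum, add_comm]
  congr 1
  apply Finset.sum_congr rfl
  intro j _
  rw [show k - (j+1) = k - 1 - j by omega]
  ring

lemma Gamma_ne (k : ℕ) : Real.Gamma ((k:ℝ) + 3/2) ≠ 0 := by
  have : (0:ℝ) < (k:ℝ) + 3/2 := by positivity
  exact (Real.Gamma_pos_of_pos this).ne'

lemma G_closed (k : ℕ) (hk : 1 ≤ k) (x : ℝ) :
    G k x = (Nat.factorial (k-1) : ℝ) / Real.Gamma ((k:ℝ) + 3/2)
      * ((2 - 2*x) * Real.sqrt (2 - 2*x)) * S k (2*x - 1) := by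
  induction k, hk using Nat.le_induction with
  | base =>
    have h := G_rec 0 x
    simp only [Nat.cast_zero, zero_mul, zero_add] at h
    have h1 : G 1 x = (2/3) * ((2 - 2*x) * Real.sqrt (2 - 2*x)) := by linarith
    rw [h1, S]
    simp [cG, Nat.factorial]
    rw [show (1:ℝ) + 3/2 = (1/2 + 1) + 1 by norm_num,
      Real.Gamma_add_one (by norm_num), Real.Gamma_add_one (by norm_num),
      show (3:ℝ)/2 = 1/2 + 1 by norm_num, Real.Gamma_add_one (by norm_num)]
    have : Real.Gamma (1/2) ≠ 0 := by
      have : (0:ℝ) < 1/2 := by norm_num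
      exact (Real.Gamma_pos_of_pos this).ne'
    field_simp
    ring
  | succ k hk ih =>
    have h := G_rec k x
    rw [ih] at h
    have hΓ : Real.Gamma ((k:ℝ) + 1 + 3/2) = ((k:ℝ) + 3/2) * Real.Gamma ((k:ℝ) + 3/2) := by
      rw [show (k:ℝ) + 1 + 3/2 = ((k:ℝ) + 3/2) + 1 by ring,
        Real.Gamma_add_one (by positivity)]
    have hfac : (Nat.factorial k : ℝ) = (k:ℝ) * (Nat.factorial (k-1) : ℝ) := by
      rw [← Nat.mul_factorial_pred (by omega : k ≠ 0)]
      push_cast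
      ring
    have hne : ((k:ℝ) + 3/2) ≠ 0 := by positivity
    have hfne : (Nat.factorial k : ℝ) ≠ 0 := by positivity
    have hcG : cG k = Real.Gamma ((k:ℝ) + 3/2) / (Nat.factorial k : ℝ) := rfl
    rw [S_succ, hcG]
    push_cast
    rw [hΓ, hfac]
    have hG : G (k+1) x = ((k:ℝ) * (2*x-1) * ((Nat.factorial (k-1) : ℝ) / Real.Gamma ((k:ℝ) + 3/2) * ((2 - 2*x) * Real.sqrt (2 - 2*x)) * S k (2*x-1)) + (2 - 2*x) * Real.sqrt (2 - 2*x)) / ((k:ℝ) + 3/2) := by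
      rw [eq_div_iff hne]
      linarith [h]
    rw [hG]
    have hfne' : (Nat.factorial (k-1) : ℝ) ≠ 0 := by positivity
    field_simp
    ring

lemma rpow_32 (a : ℝ) (ha : 0 ≤ a) : a ^ ((3:ℝ)/2) = a * Real.sqrt a := by
  rw [show (3:ℝ)/2 = 1 + 1/2 by norm_num, Real.rpow_add' ha (by norm_num), Real.rpow_one,
    Real.sqrt_eq_rpow]

lemma sum_conv (k : ℕ) (y : ℝ) :
    (∑ t ∈ Finset.Icc 1 k,
        Real.Gamma ((k : ℝ) - (t : ℝ) + 3 / 2) / (Nat.factorial (k - t) : ℝ) * y ^ (t - 1))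
      = S k y := by
  rw [← Finset.Ico_add_one_right_eq_Icc, Finset.sum_Ico_eq_sum_range]
  simp only [Nat.add_sub_cancel]
  apply Finset.sum_congr rfl
  intro i hi
  rw [Finset.mem_range] at hi
  have h1 : k - (1 + i) = k - 1 - i := by omega
  have h2 : 1 + i - 1 = i := by omega
  have h3 : ((k - 1 - i : ℕ) : ℝ) = (k : ℝ) - ((1 + i : ℕ) : ℝ) := by
    have : k - 1 - i = k - (1 + i) := by omega
    rw [this, Nat.cast_sub (by omega)]
  rw [h1, h2, cG, h3]

/-- The closed form
`G_k(x) = 2√2 ((k-1)!/Γ(k+3/2)) (1-x)^{3/2} Σ_{t=1}^{k} (Γ(k-t+3/2)/(k-t)!) (2x-1)^{t-1}`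
for all integers `k ≥ 1` and `x ∈ [0,1]`. -/
theorem G_closed_form (k : ℕ) (hk : 1 ≤ k) (x : ℝ) (hx : x ∈ Set.Icc (0 : ℝ) 1) :
    G k x = 2 * Real.sqrt 2 * ((Nat.factorial (k - 1) : ℝ) / Real.Gamma ((k : ℝ) + 3 / 2))
        * (1 - x) ^ ((3 : ℝ) / 2)
        * ∑ t ∈ Finset.Icc 1 k,
            Real.Gamma ((k : ℝ) - (t : ℝ) + 3 / 2) / (Nat.factorial (k - t) : ℝ)
              * (2 * x - 1) ^ (t - 1) := by
  rw [G_closed k hk x, sum_conv]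
  have hx1 : (0:ℝ) ≤ 1 - x := by linarith [hx.2]
  have h1 : (2 - 2*x) * Real.sqrt (2 - 2*x)
      = 2 * Real.sqrt 2 * (1 - x) ^ ((3:ℝ)/2) := by
    rw [show (2:ℝ) - 2*x = 2 * (1 - x) by ring, Real.sqrt_mul (by norm_num) (1 - x),
      rpow_32 _ hx1]
    ring
  rw [h1]
  ring
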